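/- Let A be a nonempty set, let n ≥ 2, let h : A → {0,1} be a nonconstant map, let g : {0,1} → A be a nonconstant map, and let f : A^n → A be the quasi-linear operation f(x_1, …, x_n) = g(h(x_1) ⊕ h(x_2) ⊕ ⋯ ⊕ h(x_n)), where ⊕ denotes addition modulo 2. Then all n variables of f are essential and the arity gap of f is 2. -/

import Mathlib

/-- The `i`-th variable is essential in `f`. -/
def Essential {A B : Type*} {n : ℕ} (f : (Fin n → A) → B) (i : Fin n) : Prop :=
  ∃ (a : Fin n → A) (b : A), f a ≠ f (Function.update a i b)

/-- The essential arity of `f`: the number of essential variables. -/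
noncomputable def essArity {A B : Type*} {n : ℕ} (f : (Fin n → A) → B) : ℕ :=
  Set.ncard {i : Fin n | Essential f i}

/-- The variable identification minor `f_{i←j}`, substituting `x j` for `x i`. -/
def idMinor {A B : Type*} {n : ℕ} (f : (Fin n → A) → B) (i j : Fin n) :
    (Fin n → A) → B :=
  fun x => f (Function.update x i (x j))

/-- The arity gap of `f`:
`ess f − max { ess f_{i←j} : i ≠ j, x_i and x_j essential in f }`. -/
noncomputable def arityGap {A B : Type*} {n : ℕ} (f : (Fin n → A) → B) : ℕ :=
  essArity f -
    sSup {m : ℕ | ∃ i j : Fin n, i ≠ j ∧ Essential f i ∧ Essential f j ∧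
      m = essArity (idMinor f i j)}

section helpers

variable {A : Type*} {n : ℕ} (h : A → ZMod 2) (g : ZMod 2 → A)

lemma g_ne (h01 : g 0 ≠ g 1) : ∀ u v : ZMod 2, u ≠ v → g u ≠ g v := by
  intro u v huv
  fin_cases u <;> fin_cases v <;> simp_all
  · exact absurd rfl huv
  · exact h01
  · exact fun e => h01 e.symm
  · exact absurd rfl huv

lemma g01 (hg : ∃ u v : ZMod 2, g u ≠ g v) : g 0 ≠ g 1 := by
  obtain ⟨u, v, huv⟩ := hg
  fin_cases u <;> fin_cases v <;> simp_all
  · exact huv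
  · exact fun e => huv e.symm

lemma sum_update (x : Fin n → A) (k : Fin n) (b : A) (s : Finset (Fin n)) (hk : k ∈ s) :
    ∑ i ∈ s, h (Function.update x k b i) = h b + ∑ i ∈ s \ {k}, h (x i) := by
  have : ∀ i ∈ s, h (Function.update x k b i)
      = Function.update (fun i => h (x i)) k (h b) i := by
    intro i _
    by_cases hik : i = k <;> simp [Function.update_apply, hik]
  rw [Finset.sum_congr rfl this, Finset.sum_update_of_mem hk]

lemma ess_of_mem (h01 : g 0 ≠ g 1) (a b : A) (hab : h a ≠ h b)
    (s : Finset (Fin n)) (k : Fin n) (hk : k ∈ s) :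
    Essential (fun x => g (∑ i ∈ s, h (x i))) k := by
  refine ⟨fun _ => a, b, ?_⟩
  simp only
  rw [sum_update h _ k b s hk, Finset.sum_eq_add_sum_sdiff_singleton_of_mem hk]
  exact g_ne g h01 _ _ (fun e => hab (add_right_cancel e))

lemma not_ess_of_not_mem (s : Finset (Fin n)) (k : Fin n) (hk : k ∉ s) :
    ¬ Essential (fun x => g (∑ i ∈ s, h (x i))) k := by
  rintro ⟨x, b, hx⟩
  have key : ∀ i ∈ s, h (Function.update x k b i) = h (x i) := fun i hi => by
    rw [Function.update_of_ne (by rintro rfl; exact hk hi)]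
  exact hx (congrArg g (Finset.sum_congr rfl key).symm)

lemma essSet (h01 : g 0 ≠ g 1) (a b : A) (hab : h a ≠ h b) (s : Finset (Fin n)) :
    {k : Fin n | Essential (fun x => g (∑ i ∈ s, h (x i))) k} = ↑s := by
  ext k
  simp only [Set.mem_setOf_eq, Finset.mem_coe]
  constructor
  · intro he; by_contra hk; exact not_ess_of_not_mem h g s k hk he
  · exact ess_of_mem h g h01 a b hab s k

end helpers

lemma sSup_eq_of {S : Set ℕ} (c : ℕ) (h1 : ∀ m ∈ S, m = c) (h2 : c ∈ S) :
    sSup S = c := by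
  have : S = {c} := Set.eq_singleton_iff_unique_mem.mpr ⟨h2, h1⟩
  rw [this, csSup_singleton]

/-- A quasi-linear function `g (h x₁ ⊕ ⋯ ⊕ h xₙ)` with `h` and `g` nonconstant has all
`n` variables essential and arity gap `2`. -/
theorem stmt_13 (A : Type*) [Nonempty A] {n : ℕ} (hn : 2 ≤ n)
    (h : A → ZMod 2) (g : ZMod 2 → A)
    (hh : ∃ a b : A, h a ≠ h b) (hg : ∃ u v : ZMod 2, g u ≠ g v)
    (f : (Fin n → A) → A) (hf : ∀ x : Fin n → A, f x = g (∑ i, h (x i))) :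
    (∀ i : Fin n, Essential f i) ∧ arityGap f = 2 := by
  have h01' : (⟨0, by omega⟩ : Fin n) ≠ ⟨1, by omega⟩ := by
    simp [Fin.ext_iff]
  obtain ⟨a, b, hab⟩ := hh
  have h01 := g01 g hg
  have hfe : f = fun x => g (∑ i, h (x i)) := funext hf
  subst hfe
  have hess : ∀ i : Fin n, Essential (fun x => g (∑ i, h (x i))) i := fun i =>
    ess_of_mem h g h01 a b hab Finset.univ i (Finset.mem_univ i)
  refine ⟨hess, ?_⟩
  -- essArity of f is n
  have hEf : essArity (fun x : Fin n → A => g (∑ i, h (x i))) = n := by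
    rw [essArity, essSet h g h01 a b hab Finset.univ]
    simp [Set.ncard_eq_toFinset_card']
  -- each minor
  have hminor : ∀ i j : Fin n, i ≠ j →
      essArity (idMinor (fun x : Fin n → A => g (∑ i, h (x i))) i j) = n - 2 := by
    intro i j hij
    have heq : idMinor (fun x : Fin n → A => g (∑ i, h (x i))) i j
        = fun x => g (∑ k ∈ Finset.univ \ {i, j}, h (x k)) := by
      funext x
      simp only [idMinor]
      congr 1
      rw [sum_update h x i (x j) Finset.univ (Finset.mem_univ i)]
      have hj : j ∈ Finset.univ \ ({i} : Finset (Fin n)) := by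
        simp [Ne.symm hij]
      rw [Finset.sum_eq_add_sum_sdiff_singleton_of_mem hj, ← add_assoc,
        CharTwo.add_self_eq_zero, zero_add]
      congr 1
      ext k
      simp [Finset.mem_sdiff, and_comm, and_assoc]
    rw [heq, essArity, essSet h g h01 a b hab]
    rw [Set.ncard_coe_finset]
    rw [Finset.card_univ_diff]
    simp [Finset.card_pair hij]
  rw [arityGap, hEf]
  have hsup : sSup {m : ℕ | ∃ i j : Fin n, i ≠ j ∧
      Essential (fun x : Fin n → A => g (∑ k, h (x k))) i ∧
      Essential (fun x : Fin n → A => g (∑ k, h (x k))) j ∧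
      m = essArity (idMinor (fun x : Fin n → A => g (∑ k, h (x k))) i j)} = n - 2 :=
    sSup_eq_of (n - 2)
      (by rintro m ⟨i, j, hij, -, -, rfl⟩; exact hminor i j hij)
      ⟨_, _, h01', hess _, hess _, (hminor _ _ h01').symm⟩
  rw [hsup]
  exact Nat.sub_sub_self hn
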